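/- (Generalized Hensel–Rychlík Lemma) Let R be a complete discrete valuation ring with uniformizer π, f ∈ R[X] monic, n ≥ 1, and g_(1),...,g_(n) ∈ R[X] monic of degree ≥ 1 with Res(g_(1),...,g_(n)) ≠ 0. Let t := val_π(Res(g_(1),...,g_(n))) and suppose s ≥ 2t+1 and f(X) ≡ ∏_{k∈[1,n]} g_(k)(X) mod π^s. Then there exist unique monic polynomials ĝ_(1),...,ĝ_(n) ∈ R[X] with ĝ_(k) ≡ g_(k) mod π^{s−t} for all k ∈ [1,n] and f(X) = ∏_{k∈[1,n]} ĝ_(k)(X). -/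

import Mathlib

open Polynomial Finset
open Matrix

/-- The global column position of an index in the block-structured resultant matrix. -/
def resPos {n : ℕ} {m : Fin n → ℕ} (q : (k : Fin n) × Fin (m k)) : ℕ :=
  (∑ j ∈ Finset.univ.filter (fun j => j < q.1), m j) + (q.2 : ℕ)

/-- The matrix `A(g_(1), …, g_(n))` whose block of `deg g_(k)` rows consists of the
successively shifted coefficient rows of `∏_{j ≠ k} g_(j)`. -/
noncomputable def resMatrix {R : Type*} [CommRing R] {n : ℕ} (g : Fin n → Polynomial R) :
    Matrix ((k : Fin n) × Fin ((g k).natDegree)) ((k : Fin n) × Fin ((g k).natDegree)) R :=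
  fun p q =>
    if (p.2 : ℕ) ≤ resPos q then
      (∏ j ∈ Finset.univ.erase p.1, g j).coeff (resPos q - (p.2 : ℕ))
    else 0

/-- The generalized resultant `Res(g_(1), …, g_(n)) = det A(g_(1), …, g_(n))`. -/
noncomputable def genRes {R : Type*} [CommRing R] {n : ℕ} (g : Fin n → Polynomial R) : R :=
  (resMatrix g).det

section Comb
variable {n : ℕ} {m : Fin n → ℕ}

lemma resPos_lt (q : (k : Fin n) × Fin (m k)) : resPos q < ∑ k, m k := by
  have h1 : (∑ j ∈ Finset.univ.filter (fun j => j < q.1), m j) + m q.1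
      = ∑ j ∈ insert q.1 (Finset.univ.filter (fun j => j < q.1)), m j := by
    rw [Finset.sum_insert (by simp)]
    ring
  calc resPos q < (∑ j ∈ Finset.univ.filter (fun j => j < q.1), m j) + m q.1 := by
        exact Nat.add_lt_add_left q.2.2 _
    _ = ∑ j ∈ insert q.1 (Finset.univ.filter (fun j => j < q.1)), m j := h1
    _ ≤ ∑ k, m k := Finset.sum_le_sum_of_subset (by intro x _; simp)

lemma resPos_injective : Function.Injective (resPos (m := m)) := by
  have key : ∀ p q : (k : Fin n) × Fin (m k), p.1 < q.1 → resPos p < resPos q := by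
    intro p q hpq
    have h1 : resPos p < (∑ j ∈ Finset.univ.filter (fun j => j < p.1), m j) + m p.1 :=
      Nat.add_lt_add_left p.2.2 _
    have h2 : (∑ j ∈ Finset.univ.filter (fun j => j < p.1), m j) + m p.1
        ≤ ∑ j ∈ Finset.univ.filter (fun j => j < q.1), m j := by
      rw [show (∑ j ∈ Finset.univ.filter (fun j => j < p.1), m j) + m p.1
          = ∑ j ∈ insert p.1 (Finset.univ.filter (fun j => j < p.1)), m j by
        rw [Finset.sum_insert (by simp)]; ring]
      apply Finset.sum_le_sum_of_subset
      intro x hx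
      simp only [Finset.mem_insert, Finset.mem_filter, Finset.mem_univ, true_and] at hx ⊢
      rcases hx with rfl | hx
      · exact hpq
      · exact hx.trans hpq
    have := h1.trans_le h2
    exact this.trans_le (Nat.le_add_right _ _)
  intro p q hpq
  rcases lt_trichotomy p.1 q.1 with h | h | h
  · exact absurd hpq (key p q h).ne
  · obtain ⟨k, i⟩ := p; obtain ⟨k', i'⟩ := q
    cases h
    simp only [resPos] at hpq
    have : (i : ℕ) = i' := by omega
    simp [Fin.val_injective this]
  · exact absurd hpq.symm (key q p h).ne

lemma resPos_surj {e : ℕ} (he : e < ∑ k, m k) : ∃ q : (k : Fin n) × Fin (m k), resPos q = e := by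
  classical
  have hcard : Fintype.card ((k : Fin n) × Fin (m k)) = Fintype.card (Fin (∑ k, m k)) := by
    simp
  have hbij : Function.Bijective (fun q : (k : Fin n) × Fin (m k) => (⟨resPos q, resPos_lt q⟩ : Fin (∑ k, m k))) := by
    rw [Fintype.bijective_iff_injective_and_card]
    exact ⟨fun p q h => resPos_injective (by simpa using congrArg Fin.val h), hcard⟩
  obtain ⟨q, hq⟩ := hbij.2 ⟨e, he⟩
  exact ⟨q, by simpa using congrArg Fin.val hq⟩

end Comb

namespace HR

section Poly
variable {R : Type*} [CommRing R] {n : ℕ} (m : Fin n → ℕ)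

/-- the polynomial with coefficient vector given by block `k` of `c` -/
noncomputable def polyOf (c : ((k : Fin n) × Fin (m k)) → R) (k : Fin n) : R[X] :=
  ∑ i : Fin (m k), C (c ⟨k, i⟩) * X ^ (i : ℕ)

noncomputable def myMat (h : Fin n → Polynomial R) :
    Matrix ((k : Fin n) × Fin (m k)) ((k : Fin n) × Fin (m k)) R :=
  fun p q =>
    if (p.2 : ℕ) ≤ resPos q then
      (∏ j ∈ Finset.univ.erase p.1, h j).coeff (resPos q - (p.2 : ℕ))
    else 0

variable {m}

lemma natDegree_polyOf_lt (c : ((k : Fin n) × Fin (m k)) → R) (k : Fin n) (hk : 1 ≤ m k) :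
    (polyOf m c k).natDegree < m k := by
  have : (polyOf m c k).natDegree ≤ m k - 1 := by
    apply Polynomial.natDegree_sum_le_of_forall_le
    intro i _
    exact (Polynomial.natDegree_C_mul_X_pow_le _ _).trans (by omega)
  omega

lemma polyOf_add (c d : ((k : Fin n) × Fin (m k)) → R) (k : Fin n) :
    polyOf m (c + d) k = polyOf m c k + polyOf m d k := by
  simp [polyOf, Finset.sum_add_distrib, C_add, add_mul]

lemma polyOf_sub (c d : ((k : Fin n) × Fin (m k)) → R) (k : Fin n) :
    polyOf m (c - d) k = polyOf m c k - polyOf m d k := by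
  simp [polyOf, Finset.sum_sub_distrib, C_sub, sub_mul]

lemma polyOf_smul (a : R) (c : ((k : Fin n) × Fin (m k)) → R) (k : Fin n) :
    polyOf m (a • c) k = C a * polyOf m c k := by
  simp [polyOf, Finset.mul_sum, C_mul, mul_assoc]

lemma C_dvd_polyOf {x : R} (c : ((k : Fin n) × Fin (m k)) → R) (k : Fin n)
    (hc : ∀ p, x ∣ c p) : C x ∣ polyOf m c k := by
  apply Finset.dvd_sum
  intro i _
  obtain ⟨e, he⟩ := hc ⟨k, i⟩
  exact Dvd.dvd.mul_right ⟨C e, by rw [he, C_mul]⟩ _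

/-- a polynomial whose coefficients vanish from degree `mk` on equals the `polyOf` of
its coefficient vector -/
lemma eq_polyOf_of_coeff {h : Polynomial R} {k : Fin n}
    (hh : ∀ e, m k ≤ e → h.coeff e = 0) (c : ((k : Fin n) × Fin (m k)) → R)
    (hc : ∀ i : Fin (m k), c ⟨k, i⟩ = h.coeff i) : polyOf m c k = h := by
  ext e
  rw [polyOf, Polynomial.finset_sum_coeff]
  by_cases he : e < m k
  · rw [Finset.sum_eq_single (⟨e, he⟩ : Fin (m k))]
    · simp [hc]
    · intro i _ hie
      simp only [Polynomial.coeff_C_mul, Polynomial.coeff_X_pow]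
      rw [if_neg (by rintro rfl; exact hie (by simp)), mul_zero]
    · simp
  · rw [hh e (by omega)]
    apply Finset.sum_eq_zero
    intro i _
    simp only [Polynomial.coeff_C_mul, Polynomial.coeff_X_pow]
    rw [if_neg (by omega), mul_zero]

/-- key coefficient identity : the coefficient of `Φ c` at `resPos q` is the
`q` entry of `(myMat m h)ᵀ *ᵥ c`. -/
lemma Phi_coeff (h : Fin n → Polynomial R) (c : ((k : Fin n) × Fin (m k)) → R)
    (q : (k : Fin n) × Fin (m k)) :
    (∑ k, polyOf m c k * ∏ j ∈ Finset.univ.erase k, h j).coeff (resPos q)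
      = ((myMat m h)ᵀ *ᵥ c) q := by
  have hr : ((myMat m h)ᵀ *ᵥ c) q = ∑ k : Fin n, ∑ i : Fin (m k), c ⟨k, i⟩ * myMat m h ⟨k, i⟩ q := by
    rw [Matrix.mulVec, dotProduct, ← Finset.univ_sigma_univ, Finset.sum_sigma]
    apply Finset.sum_congr rfl; intro k _
    apply Finset.sum_congr rfl; intro i _
    rw [Matrix.transpose_apply, mul_comm]
  rw [hr, Polynomial.finset_sum_coeff]
  apply Finset.sum_congr rfl
  intro k _
  rw [polyOf, Finset.sum_mul, Polynomial.finset_sum_coeff]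
  apply Finset.sum_congr rfl
  intro i _
  rw [show C (c ⟨k, i⟩) * X ^ (i : ℕ) * ∏ j ∈ Finset.univ.erase k, h j
      = C (c ⟨k, i⟩) * ((∏ j ∈ Finset.univ.erase k, h j) * X ^ (i : ℕ)) by ring]
  rw [Polynomial.coeff_C_mul, Polynomial.coeff_mul_X_pow']
  simp only [myMat]

/-- coefficients of `Φ c` vanish in degrees `≥ ∑ m k` -/
lemma Phi_coeff_high (h : Fin n → Polynomial R) (hh : ∀ k, (h k).Monic ∧ (h k).natDegree = m k)
    (hm : ∀ k, 1 ≤ m k) (c : ((k : Fin n) × Fin (m k)) → R) {e : ℕ} (he : (∑ k, m k) ≤ e) :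
    (∑ k, polyOf m c k * ∏ j ∈ Finset.univ.erase k, h j).coeff e = 0 := by
  rw [Polynomial.finset_sum_coeff]
  apply Finset.sum_eq_zero
  intro k _
  apply Polynomial.coeff_eq_zero_of_natDegree_lt
  have h1 : (∏ j ∈ Finset.univ.erase k, h j).natDegree = ∑ j ∈ Finset.univ.erase k, m j := by
    rw [Polynomial.natDegree_prod_of_monic _ _ (fun j _ => (hh j).1)]
    exact Finset.sum_congr rfl (fun j _ => (hh j).2)
  have h2 : ∑ j ∈ Finset.univ.erase k, m j + m k = ∑ j, m j := Finset.sum_erase_add _ _ (by simp)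
  calc (polyOf m c k * ∏ j ∈ Finset.univ.erase k, h j).natDegree
      ≤ (polyOf m c k).natDegree + (∏ j ∈ Finset.univ.erase k, h j).natDegree :=
        Polynomial.natDegree_mul_le
    _ < e := by
        have := natDegree_polyOf_lt c k (hm k)
        omega

/-- solving the linear system via the adjugate -/
lemma solve (h : Fin n → Polynomial R) (hh : ∀ k, (h k).Monic ∧ (h k).natDegree = m k)
    (hm : ∀ k, 1 ≤ m k) (r : Polynomial R) (hr : ∀ e, (∑ k, m k) ≤ e → r.coeff e = 0) :
    ∃ d : ((k : Fin n) × Fin (m k)) → R,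
      (∀ x : R, (∀ e, x ∣ r.coeff e) → ∀ p, x ∣ d p) ∧
      (∑ k, polyOf m d k * ∏ j ∈ Finset.univ.erase k, h j) = C (myMat m h).det * r := by
  classical
  set A := myMat m h with hA
  refine ⟨Aᵀ.adjugate *ᵥ (fun q => r.coeff (resPos q)), ?_, ?_⟩
  · intro x hx p
    exact Finset.dvd_sum (fun q _ => Dvd.dvd.mul_left (hx _) _)
  · ext e
    rw [Polynomial.coeff_C_mul]
    by_cases he : e < ∑ k, m k
    · obtain ⟨q, rfl⟩ := resPos_surj he
      rw [Phi_coeff]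
      rw [Matrix.mulVec_mulVec, Matrix.mul_adjugate, Matrix.det_transpose, Matrix.smul_mulVec,
        Matrix.one_mulVec]
      simp [hA]
    · rw [Phi_coeff_high h hh hm _ (by omega), hr e (by omega), mul_zero]

/-- reverse direction: divisibility of the coefficients of `Φ c` forces divisibility
of `det • c`. -/
lemma reverse (h : Fin n → Polynomial R) {x : R} (c : ((k : Fin n) × Fin (m k)) → R)
    (hx : ∀ e, x ∣ (∑ k, polyOf m c k * ∏ j ∈ Finset.univ.erase k, h j).coeff e) :
    ∀ p, x ∣ (myMat m h).det * c p := by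
  intro p
  have key : (myMat m h).det * c p = ((myMat m h)ᵀ.adjugate *ᵥ ((myMat m h)ᵀ *ᵥ c)) p := by
    rw [Matrix.mulVec_mulVec, Matrix.adjugate_mul, Matrix.det_transpose, Matrix.smul_mulVec,
      Matrix.one_mulVec]
    simp
  rw [key]
  apply Finset.dvd_sum
  intro q _
  rw [← Phi_coeff]
  exact Dvd.dvd.mul_left (hx _) _

end Poly

section Ring
variable {R : Type*} [CommRing R]

lemma dvd_prod_sub_prod {ι : Type*} (s : Finset ι) {x : R} {a b : ι → R}
    (h : ∀ i ∈ s, x ∣ a i - b i) : x ∣ ∏ i ∈ s, a i - ∏ i ∈ s, b i := by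
  classical
  induction s using Finset.induction_on with
  | empty => simp
  | @insert j s' hj ih =>
    rw [Finset.prod_insert hj, Finset.prod_insert hj]
    have h1 : x ∣ a j - b j := h j (by simp)
    have h2 : x ∣ ∏ i ∈ s', a i - ∏ i ∈ s', b i := ih (fun i hi => h i (by simp [hi]))
    have : a j * ∏ i ∈ s', a i - b j * ∏ i ∈ s', b i
        = (a j - b j) * ∏ i ∈ s', a i + b j * (∏ i ∈ s', a i - ∏ i ∈ s', b i) := by ring
    rw [this]
    exact dvd_add (h1.mul_right _) (h2.mul_left _)

lemma dvd_det_sub_det {ι : Type*} [DecidableEq ι] [Fintype ι] {x : R} (A B : Matrix ι ι R)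
    (h : ∀ p q, x ∣ A p q - B p q) : x ∣ A.det - B.det := by
  let φ := Ideal.Quotient.mk (Ideal.span {x})
  have hAB : A.map φ = B.map φ := by
    ext p q
    simp only [Matrix.map_apply, φ]
    rw [Ideal.Quotient.mk_eq_mk_iff_sub_mem, Ideal.mem_span_singleton]
    exact h p q
  have h0 : φ (A.det - B.det) = 0 := by
    rw [map_sub, RingHom.map_det, RingHom.map_det]
    show (A.map φ).det - (B.map φ).det = 0
    rw [hAB, sub_self]
  rwa [Ideal.Quotient.eq_zero_iff_mem, Ideal.mem_span_singleton] at h0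

end Ring

section Ring2
variable {R : Type*} [CommRing R]

lemma prod_add_expand {S : Type*} [CommRing S] {n : ℕ} (a b : Fin n → S) {y : S}
    (hb : ∀ k, y ∣ b k) :
    y ^ 2 ∣ (∏ k, (a k + b k)) - (∏ k, a k) - ∑ k, b k * ∏ j ∈ Finset.univ.erase k, a j := by
  classical
  have hexp : (∏ k, (a k + b k))
      = ∑ t ∈ (Finset.univ : Finset (Fin n)).powerset, (∏ i ∈ t, b i) * ∏ i ∈ Finset.univ \ t, a i := by
    rw [← Finset.prod_add b a Finset.univ]
    exact Finset.prod_congr rfl fun k _ => add_comm _ _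
  rw [hexp, ← Finset.sum_filter_add_sum_filter_not (Finset.univ.powerset) (fun t => t.card ≤ 1)]
  have hsmall : (Finset.univ.powerset.filter fun t : Finset (Fin n) => t.card ≤ 1)
      = insert ∅ (Finset.univ.image fun k : Fin n => ({k} : Finset (Fin n))) := by
    ext u
    simp only [Finset.mem_filter, Finset.mem_powerset, Finset.mem_insert, Finset.mem_image,
      Finset.mem_univ, true_and]
    constructor
    · rintro ⟨-, hc⟩
      interval_cases h : u.card
      · exact Or.inl (Finset.card_eq_zero.1 h)
      · obtain ⟨k, rfl⟩ := Finset.card_eq_one.1 h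
        exact Or.inr ⟨k, rfl⟩
    · rintro (rfl | ⟨k, rfl⟩) <;> simp
  have hsum_small : ∑ t ∈ Finset.univ.powerset.filter (fun t : Finset (Fin n) => t.card ≤ 1),
        (∏ i ∈ t, b i) * ∏ i ∈ Finset.univ \ t, a i
      = ∏ k, a k + ∑ k, b k * ∏ j ∈ Finset.univ.erase k, a j := by
    rw [hsmall, Finset.sum_insert (by simp)]
    rw [Finset.sum_image (fun x _ y _ h => Finset.singleton_injective h)]
    simp [Finset.sdiff_singleton_eq_erase]
  rw [hsum_small]
  have hrw : ∀ X Y Z W : S, (Y + W) + X - Y - W = X := fun X Y Z W => by ring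
  rw [show ((∏ k, a k + ∑ k, b k * ∏ j ∈ Finset.univ.erase k, a j)
      + ∑ t ∈ Finset.univ.powerset.filter (fun t : Finset (Fin n) => ¬ t.card ≤ 1),
        (∏ i ∈ t, b i) * ∏ i ∈ Finset.univ \ t, a i)
      - (∏ k, a k) - (∑ k, b k * ∏ j ∈ Finset.univ.erase k, a j)
      = ∑ t ∈ Finset.univ.powerset.filter (fun t : Finset (Fin n) => ¬ t.card ≤ 1),
        (∏ i ∈ t, b i) * ∏ i ∈ Finset.univ \ t, a i by ring]
  apply Finset.dvd_sum
  intro u hu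
  rw [Finset.mem_filter] at hu
  have hcard : 2 ≤ u.card := by omega
  apply Dvd.dvd.mul_right
  calc y ^ 2 ∣ y ^ u.card := pow_dvd_pow y hcard
    _ = ∏ _i ∈ u, y := (Finset.prod_const y).symm
    _ ∣ ∏ i ∈ u, b i := Finset.prod_dvd_prod_of_dvd _ _ fun i _ => hb i

lemma monic_sub_coeff {f h : R[X]} (hf : f.Monic) (hh : h.Monic) {x : R} (hx : ¬ IsUnit x)
    (hd : C x ∣ f - h) :
    f.natDegree = h.natDegree ∧ ∀ e, f.natDegree ≤ e → (f - h).coeff e = 0 := by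
  have hcoeff : ∀ e, x ∣ (f - h).coeff e := (C_dvd_iff_dvd_coeff x _).1 hd
  have key : ∀ p q : R[X], p.Monic → q.Monic → p.natDegree < q.natDegree →
      (∀ e, x ∣ (p - q).coeff e) → False := by
    intro p q hp hq hlt hdvd
    have h1 : (p - q).coeff q.natDegree = -1 := by
      rw [Polynomial.coeff_sub, Polynomial.coeff_eq_zero_of_natDegree_lt hlt,
        hq.coeff_natDegree]
      ring
    have h2 := hdvd q.natDegree
    rw [h1] at h2
    exact hx (isUnit_of_dvd_unit h2 isUnit_one.neg)
  have hdeg : f.natDegree = h.natDegree := by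
    rcases lt_trichotomy f.natDegree h.natDegree with hl | he | hl
    · exact absurd (key f h hf hh hl hcoeff) not_false
    · exact he
    · exact absurd (key h f hh hf hl (fun e => by
        simpa [Polynomial.coeff_sub] using dvd_sub_comm.1 (by
          simpa [Polynomial.coeff_sub] using hcoeff e))) not_false
  refine ⟨hdeg, fun e he => ?_⟩
  rcases eq_or_lt_of_le he with rfl | hlt
  · rw [Polynomial.coeff_sub, hf.coeff_natDegree, hdeg, hh.coeff_natDegree, sub_self]
  · rw [Polynomial.coeff_sub, Polynomial.coeff_eq_zero_of_natDegree_lt hlt,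
      Polynomial.coeff_eq_zero_of_natDegree_lt (hdeg ▸ hlt), sub_zero]

lemma exists_unit_of_val [IsDomain R] [IsDiscreteValuationRing R] {π d : R}
    (hπ : Irreducible π) {t : ℕ} (h1 : π ^ t ∣ d) (h2 : ¬ π ^ (t + 1) ∣ d) :
    ∃ u : Rˣ, d = π ^ t * (u : R) := by
  obtain ⟨e, rfl⟩ := h1
  have he : IsUnit e := by
    by_contra hu
    have : e ∈ IsLocalRing.maximalIdeal R := hu
    rw [hπ.maximalIdeal_eq, Ideal.mem_span_singleton] at this
    obtain ⟨w, rfl⟩ := this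
    exact h2 ⟨w, by ring⟩
  obtain ⟨u, rfl⟩ := he
  exact ⟨u, rfl⟩

lemma smod_iff_dvd {π a b : R} {M : ℕ} :
    a ≡ b [SMOD (Ideal.span {π} ^ M • ⊤ : Submodule R R)] ↔ π ^ M ∣ a - b := by
  rw [SModEq.sub_mem]
  have h : (Ideal.span {π} ^ M • ⊤ : Submodule R R) = Ideal.span {π ^ M} := by
    rw [smul_eq_mul, Ideal.mul_top, Ideal.span_singleton_pow]
  rw [h, Ideal.mem_span_singleton]

end Ring2

section Main
variable {R : Type*} [CommRing R] [IsDomain R] [IsDiscreteValuationRing R]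
variable {n : ℕ} (g : Fin n → Polynomial R)

/-- the perturbed family -/
noncomputable def G (c : ((k : Fin n) × Fin ((g k).natDegree)) → R) (k : Fin n) : Polynomial R :=
  g k + polyOf (fun k => (g k).natDegree) c k

lemma G_monic (hmonic : ∀ k, (g k).Monic) (hdeg : ∀ k, 1 ≤ (g k).natDegree)
    (c : ((k : Fin n) × Fin ((g k).natDegree)) → R) (k : Fin n) :
    (G g c k).Monic ∧ (G g c k).natDegree = (g k).natDegree := by
  have hlt : (polyOf (fun k => (g k).natDegree) c k).degree < (g k).degree := by
    have h1 : (polyOf (fun k => (g k).natDegree) c k).natDegree < (g k).natDegree :=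
      natDegree_polyOf_lt c k (hdeg k)
    have h2 : (polyOf (fun k => (g k).natDegree) c k).degree
        ≤ ((polyOf (fun k => (g k).natDegree) c k).natDegree : WithBot ℕ) :=
      Polynomial.degree_le_natDegree
    have h3 : (g k).degree = ((g k).natDegree : WithBot ℕ) :=
      Polynomial.degree_eq_natDegree (hmonic k).ne_zero
    rw [h3]
    exact h2.trans_lt (by exact_mod_cast h1)
  constructor
  · exact (hmonic k).add_of_left hlt
  · rw [G]
    exact Polynomial.natDegree_eq_of_degree_eq (Polynomial.degree_add_eq_left_of_degree_lt hlt)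

lemma G_zero : G g 0 = g := by
  funext k
  rw [G]
  simp [polyOf]

lemma G_prod_monic (hmonic : ∀ k, (g k).Monic) (hdeg : ∀ k, 1 ≤ (g k).natDegree)
    (c : ((k : Fin n) × Fin ((g k).natDegree)) → R) :
    (∏ k, G g c k).Monic ∧ (∏ k, G g c k).natDegree = ∑ k, (g k).natDegree := by
  constructor
  · exact Polynomial.monic_prod_of_monic _ _ fun k _ => (G_monic g hmonic hdeg c k).1
  · rw [Polynomial.natDegree_prod_of_monic _ _ fun k _ => (G_monic g hmonic hdeg c k).1]
    exact Finset.sum_congr rfl fun k _ => (G_monic g hmonic hdeg c k).2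

lemma G_sub_dvd {x : R} (c d : ((k : Fin n) × Fin ((g k).natDegree)) → R)
    (h : ∀ p, x ∣ c p - d p) (k : Fin n) : C x ∣ G g c k - G g d k := by
  rw [G, G, show g k + polyOf (fun k => (g k).natDegree) c k
      - (g k + polyOf (fun k => (g k).natDegree) d k)
      = polyOf (fun k => (g k).natDegree) c k - polyOf (fun k => (g k).natDegree) d k by ring,
    ← polyOf_sub]
  exact C_dvd_polyOf _ _ h

/-- the determinant of the perturbed matrix still has valuation exactly `t`. -/
lemma det_perturbed (hmonic : ∀ k, (g k).Monic) (hdeg : ∀ k, 1 ≤ (g k).natDegree) {π : R} (hπ : Irreducible π) {t s : ℕ} (hs : 2 * t + 1 ≤ s)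
    (ht : π ^ t ∣ (myMat (fun k => (g k).natDegree) g).det ∧
      ¬ π ^ (t + 1) ∣ (myMat (fun k => (g k).natDegree) g).det)
    (c : ((k : Fin n) × Fin ((g k).natDegree)) → R) (hc : ∀ p, π ^ (s - t) ∣ c p) :
    ∃ u : Rˣ, (myMat (fun k => (g k).natDegree) (G g c)).det = π ^ t * (u : R) := by
  have hdiff : π ^ (s - t) ∣ (myMat (fun k => (g k).natDegree) (G g c)).det
      - (myMat (fun k => (g k).natDegree) g).det := by
    apply dvd_det_sub_det
    intro p q
    rw [myMat, myMat]
    split_ifs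
    · have hprod : C (π ^ (s - t)) ∣ (∏ j ∈ Finset.univ.erase p.1, G g c j)
          - ∏ j ∈ Finset.univ.erase p.1, g j := by
        apply dvd_prod_sub_prod
        intro j _
        have := G_sub_dvd g (x := π ^ (s - t)) c 0 (fun p => by simpa using hc p) j
        rwa [G_zero] at this
      rw [← Polynomial.coeff_sub]
      exact (C_dvd_iff_dvd_coeff _ _).1 hprod _
    · simp
  have h1 : π ^ t ∣ (myMat (fun k => (g k).natDegree) (G g c)).det := by
    have : π ^ t ∣ π ^ (s - t) := pow_dvd_pow π (by omega)
    have h2 := (this.trans hdiff)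
    have := dvd_add h2 ht.1
    simpa using this
  have h2 : ¬ π ^ (t + 1) ∣ (myMat (fun k => (g k).natDegree) (G g c)).det := by
    intro hcon
    apply ht.2
    have h3 : π ^ (t + 1) ∣ π ^ (s - t) := pow_dvd_pow π (by omega)
    have := dvd_sub hcon (h3.trans hdiff)
    simpa using this
  exact exists_unit_of_val hπ h1 h2

/-- The Newton iteration step. -/
lemma newton_step (hmonic : ∀ k, (g k).Monic) (hdeg : ∀ k, 1 ≤ (g k).natDegree) {π : R} (hπ : Irreducible π) {t s : ℕ} (hs : 2 * t + 1 ≤ s)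
    (ht : π ^ t ∣ (myMat (fun k => (g k).natDegree) g).det ∧
      ¬ π ^ (t + 1) ∣ (myMat (fun k => (g k).natDegree) g).det)
    (f : Polynomial R) (hf : f.Monic) (S : ℕ) (hS : s ≤ S)
    (c : ((k : Fin n) × Fin ((g k).natDegree)) → R) (hc : ∀ p, π ^ (s - t) ∣ c p)
    (hfc : C (π ^ S) ∣ f - ∏ k, G g c k) :
    ∃ d : ((k : Fin n) × Fin ((g k).natDegree)) → R,
      (∀ p, π ^ (S - t) ∣ d p) ∧ (∀ p, π ^ (s - t) ∣ (c + d) p) ∧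
      C (π ^ (S + 1)) ∣ f - ∏ k, G g (c + d) k := by
  classical
  set m : Fin n → ℕ := fun k => (g k).natDegree with hm
  set r : Polynomial R := f - ∏ k, G g c k with hr
  have hπS : ¬ IsUnit (π ^ S) := fun h => hπ.not_isUnit ((isUnit_pow_iff (by omega : S ≠ 0)).1 h)
  have hprod := G_prod_monic g hmonic hdeg c
  have hmsc := monic_sub_coeff hf hprod.1 hπS hfc
  have hrc : ∀ e, (∑ k, m k) ≤ e → r.coeff e = 0 := by
    intro e he
    exact hmsc.2 e (by rw [hmsc.1, hprod.2]; exact he)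
  -- write r = π^S * w
  obtain ⟨w, hw⟩ := hfc
  have hwc : ∀ e, (∑ k, m k) ≤ e → w.coeff e = 0 := by
    intro e he
    have h0 := hrc e he
    rw [hw, Polynomial.coeff_C_mul] at h0
    exact (mul_eq_zero.1 h0).resolve_left (pow_ne_zero S hπ.ne_zero)
  obtain ⟨d₀, hd₀div, hd₀eq⟩ := solve (G g c) (fun k => G_monic g hmonic hdeg c k) hdeg w hwc
  obtain ⟨u, hu⟩ := det_perturbed g hmonic hdeg hπ hs ht c hc
  set d : ((k : Fin n) × Fin (m k)) → R := (π ^ (S - t) * ((u⁻¹ : Rˣ) : R)) • d₀ with hd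
  have hd1 : ∀ p, π ^ (S - t) ∣ d p := by
    intro p
    rw [hd, Pi.smul_apply, smul_eq_mul]
    exact ⟨(u⁻¹ : Rˣ) * d₀ p, by ring⟩
  have hΦ : (∑ k, polyOf m d k * ∏ j ∈ Finset.univ.erase k, G g c j) = r := by
    have h1 : ∀ k, polyOf m d k = C (π ^ (S - t) * ((u⁻¹ : Rˣ) : R)) * polyOf m d₀ k :=
      fun k => polyOf_smul _ _ _
    calc (∑ k, polyOf m d k * ∏ j ∈ Finset.univ.erase k, G g c j)
        = C (π ^ (S - t) * ((u⁻¹ : Rˣ) : R))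
            * ∑ k, polyOf m d₀ k * ∏ j ∈ Finset.univ.erase k, G g c j := by
          rw [Finset.mul_sum]
          exact Finset.sum_congr rfl fun k _ => by rw [h1 k]; ring
      _ = C (π ^ (S - t) * ((u⁻¹ : Rˣ) : R)) * (C (myMat m (G g c)).det * w) := by rw [hd₀eq]
      _ = C (π ^ (S - t) * ((u⁻¹ : Rˣ) : R) * (π ^ t * (u : R))) * w := by
          rw [hu, ← mul_assoc, ← Polynomial.C_mul]
      _ = C (π ^ S) * w := by
          congr 1
          rw [show π ^ (S - t) * ((u⁻¹ : Rˣ) : R) * (π ^ t * (u : R))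
              = π ^ (S - t) * π ^ t * (((u⁻¹ : Rˣ) : R) * (u : R)) by ring,
            Units.inv_mul, mul_one, ← pow_add, show S - t + t = S by omega]
      _ = r := hw.symm
  refine ⟨d, hd1, ?_, ?_⟩
  · intro p
    rw [Pi.add_apply]
    exact dvd_add (hc p) ((pow_dvd_pow π (by omega : s - t ≤ S - t)).trans (hd1 p))
  · have hGcd : ∀ k, G g (c + d) k = G g c k + polyOf m d k := by
      intro k
      rw [G, G, polyOf_add]
      ring
    have hexp := prod_add_expand (G g c) (polyOf m d) (y := C (π ^ (S - t)))
      (fun k => C_dvd_polyOf _ _ hd1)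
    rw [show (fun k => G g c k + polyOf m d k) = G g (c + d) from funext fun k => (hGcd k).symm]
      at hexp
    have h2 : C (π ^ (S + 1)) ∣ (C (π ^ (S - t)) : R[X]) ^ 2 := by
      rw [← Polynomial.C_pow, ← pow_mul]
      exact map_dvd Polynomial.C (pow_dvd_pow π (by omega))
    have h3 := h2.trans hexp
    have h4 : f - ∏ k, G g (c + d) k
        = -((∏ k, G g (c + d) k) - (∏ k, G g c k)
          - ∑ k, polyOf m d k * ∏ j ∈ Finset.univ.erase k, G g c j) := by
      rw [hΦ, hr]; ring
    rw [h4]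
    exact dvd_neg.2 h3

/-- uniqueness of close factorizations. -/
lemma uniqueness (hmonic : ∀ k, (g k).Monic) (hdeg : ∀ k, 1 ≤ (g k).natDegree)
    {π : R} (hπ : Irreducible π) (hcomplete : IsAdicComplete (Ideal.span {π}) R)
    {t s : ℕ} (hs : 2 * t + 1 ≤ s)
    (ht : π ^ t ∣ (myMat (fun k => (g k).natDegree) g).det ∧
      ¬ π ^ (t + 1) ∣ (myMat (fun k => (g k).natDegree) g).det)
    (f : Polynomial R) (u v : Fin n → Polynomial R)
    (hu : ∀ k, (u k).Monic ∧ C (π ^ (s - t)) ∣ (u k - g k)) (hufact : f = ∏ k, u k)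
    (hv : ∀ k, (v k).Monic ∧ C (π ^ (s - t)) ∣ (v k - g k)) (hvfact : f = ∏ k, v k) :
    u = v := by
  classical
  set m : Fin n → ℕ := fun k => (g k).natDegree with hm
  have hπst : ¬ IsUnit (π ^ (s - t)) :=
    fun h => hπ.not_isUnit ((isUnit_pow_iff (by omega : s - t ≠ 0)).1 h)
  have repr : ∀ w : Fin n → Polynomial R, (∀ k, (w k).Monic ∧ C (π ^ (s - t)) ∣ (w k - g k)) →
      ∃ c : ((k : Fin n) × Fin (m k)) → R, (∀ p, π ^ (s - t) ∣ c p) ∧ G g c = w := by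
    intro w hw
    have hco : ∀ k, ∀ e, m k ≤ e → (w k - g k).coeff e = 0 := by
      intro k
      have h1 := monic_sub_coeff (hw k).1 (hmonic k) hπst (hw k).2
      intro e he
      exact h1.2 e (by rw [h1.1]; exact he)
    refine ⟨fun p => (w p.1 - g p.1).coeff p.2, ?_, ?_⟩
    · intro p
      exact (C_dvd_iff_dvd_coeff _ _).1 (hw p.1).2 _
    · funext k
      rw [G, eq_polyOf_of_coeff (hco k) _ (fun i => rfl)]
      ring
  obtain ⟨cu, hcud, hcu⟩ := repr u hu
  obtain ⟨cv, hcvd, hcv⟩ := repr v hv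
  obtain ⟨u0, hu0⟩ := det_perturbed g hmonic hdeg hπ hs ht cv hcvd
  have key : ∀ j p, π ^ (s - t + j) ∣ (cu - cv) p := by
    intro j
    induction j with
    | zero =>
      intro p
      simpa using dvd_sub (hcud p) (hcvd p)
    | succ j ih =>
      have hexp := prod_add_expand (G g cv) (polyOf m (cu - cv)) (y := (C (π ^ (s - t + j)) : _))
        (fun k => C_dvd_polyOf _ _ ih)
      have hGG : (fun k => G g cv k + polyOf m (cu - cv) k) = G g cu := by
        funext k
        rw [G, G, polyOf_sub]
        ring
      rw [hGG] at hexp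
      have hprod_eq : (∏ k, G g cu k) = ∏ k, G g cv k := by
        rw [hcu, hcv, ← hufact, ← hvfact]
      rw [hprod_eq] at hexp
      have hΦdvd : C (π ^ (2 * (s - t + j)))
          ∣ ∑ k, polyOf m (cu - cv) k * ∏ j' ∈ Finset.univ.erase k, G g cv j' := by
        have hC2 : ((C (π ^ (s - t + j)) : Polynomial R)) ^ 2 = C (π ^ (2 * (s - t + j))) := by
          rw [← Polynomial.C_pow, ← pow_mul, mul_comm]
        rw [← hC2]
        have := dvd_neg.2 hexp
        simpa using this
      intro p
      have h6 := reverse (G g cv) (cu - cv) (fun e => (C_dvd_iff_dvd_coeff _ _).1 hΦdvd e) p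
      rw [hu0] at h6
      obtain ⟨y, hy⟩ := h6
      have h7 : (u0 : R) * (cu - cv) p = π ^ (2 * (s - t + j) - t) * y := by
        have hπt : (π : R) ^ t ≠ 0 := pow_ne_zero _ hπ.ne_zero
        apply mul_left_cancel₀ hπt
        calc π ^ t * ((u0 : R) * (cu - cv) p) = π ^ t * (u0 : R) * (cu - cv) p := by ring
          _ = π ^ (2 * (s - t + j)) * y := hy
          _ = π ^ t * (π ^ (2 * (s - t + j) - t) * y) := by
              rw [show (π : R) ^ (2 * (s - t + j))
                = π ^ t * π ^ (2 * (s - t + j) - t) from by rw [← pow_add]; congr 1; omega]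
              ring
      have h8 : π ^ (2 * (s - t + j) - t) ∣ (cu - cv) p := by
        refine ⟨((u0⁻¹ : Rˣ) : R) * y, ?_⟩
        calc (cu - cv) p = ((u0⁻¹ : Rˣ) : R) * ((u0 : R) * (cu - cv) p) := by
              rw [← mul_assoc, Units.inv_mul, one_mul]
          _ = π ^ (2 * (s - t + j) - t) * (((u0⁻¹ : Rˣ) : R) * y) := by rw [h7]; ring
      exact (pow_dvd_pow π (by omega : s - t + (j + 1) ≤ 2 * (s - t + j) - t)).trans h8
  have hzero : cu = cv := by
    funext p
    have h0 : (cu - cv) p = 0 := by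
      apply hcomplete.toIsHausdorff.haus
      intro M
      exact smod_iff_dvd.2 (by
        simpa using (pow_dvd_pow π (by omega : M ≤ s - t + M)).trans (key M p))
    have := sub_eq_zero.1 (by simpa using h0)
    exact this
  rw [← hcu, ← hcv, hzero]

end Main

end HR

/-- **Generalized Hensel–Rychlík Lemma:** over a complete discrete valuation ring, a
factorisation `f ≡ ∏_k g_(k) mod π^s` into `n` monic factors with
`s ≥ 2t + 1`, `t = val_π(Res(g_(1), …, g_(n)))`, lifts to a unique true factorisation
`f = ∏_k ĝ_(k)` with monic `ĝ_(k) ≡ g_(k) mod π^{s−t}`. -/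
theorem hensel_rychlik_general
    {R : Type*} [CommRing R] [IsDomain R] [IsDiscreteValuationRing R]
    (π : R) (hπ : Irreducible π)
    (hcomplete : IsAdicComplete (Ideal.span {π}) R)
    (f : Polynomial R) (hf : f.Monic)
    {n : ℕ} (hn : 1 ≤ n) (g : Fin n → Polynomial R)
    (hmonic : ∀ k, (g k).Monic) (hdeg : ∀ k, 1 ≤ (g k).natDegree)
    (hres : genRes g ≠ 0)
    (t : ℕ) (ht : π ^ t ∣ genRes g ∧ ¬ π ^ (t + 1) ∣ genRes g)
    (s : ℕ) (hs : 2 * t + 1 ≤ s)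
    (hcongr : C (π ^ s) ∣ (f - ∏ k, g k)) :
    ∃! g' : Fin n → Polynomial R,
      (∀ k, (g' k).Monic ∧ C (π ^ (s - t)) ∣ (g' k - g k)) ∧ f = ∏ k, g' k := by
  classical
  have htm : π ^ t ∣ (HR.myMat (fun k => (g k).natDegree) g).det ∧
      ¬ π ^ (t + 1) ∣ (HR.myMat (fun k => (g k).natDegree) g).det := ht
  have step := fun (i : ℕ) => HR.newton_step g hmonic hdeg hπ hs htm f hf (s + i) (by omega)
  have base : C (π ^ (s + 0)) ∣ f - ∏ k, HR.G g (0 : ((k : Fin n) × Fin ((g k).natDegree)) → R) k := by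
    rw [HR.G_zero]
    simpa using hcongr
  let Fseq : ∀ i : ℕ, {c : ((k : Fin n) × Fin ((g k).natDegree)) → R //
      (∀ p, π ^ (s - t) ∣ c p) ∧ C (π ^ (s + i)) ∣ f - ∏ k, HR.G g c k} :=
    fun i => Nat.rec ⟨0, fun p => dvd_zero _, base⟩
      (fun i prev => ⟨prev.1 + (step i prev.1 prev.2.1 prev.2.2).choose,
        (step i prev.1 prev.2.1 prev.2.2).choose_spec.2.1,
        (step i prev.1 prev.2.1 prev.2.2).choose_spec.2.2⟩) i
  let cs : ℕ → ((k : Fin n) × Fin ((g k).natDegree)) → R := fun i => (Fseq i).1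
  have hFS : ∀ i, cs (i + 1) = cs i + (step i (cs i) (Fseq i).2.1 (Fseq i).2.2).choose :=
    fun i => rfl
  have hadj : ∀ i p, π ^ (s + i - t) ∣ (cs (i + 1) - cs i) p := by
    intro i p
    rw [hFS i]
    have hspec := (step i (cs i) (Fseq i).2.1 (Fseq i).2.2).choose_spec.1 p
    simp only [Pi.sub_apply, Pi.add_apply, add_sub_cancel_left]
    exact hspec
  have hgap : ∀ i j, i ≤ j → ∀ p, π ^ (s + i - t) ∣ (cs j - cs i) p := by
    intro i j hij
    induction j, hij using Nat.le_induction with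
    | base => intro p; simp
    | succ j hij ih =>
      intro p
      have h2 : (cs (j + 1) - cs i) p = (cs (j + 1) - cs j) p + (cs j - cs i) p := by simp
      rw [h2]
      exact dvd_add ((pow_dvd_pow π (by omega)).trans (hadj j p)) (ih p)
  have cauchy : ∀ p, ∀ {a b : ℕ}, a ≤ b →
      cs a p ≡ cs b p [SMOD ((Ideal.span {π}) ^ a • ⊤ : Submodule R R)] := by
    intro p a b hab
    rw [HR.smod_iff_dvd]
    rw [show cs a p - cs b p = -((cs b - cs a) p) by simp]
    exact dvd_neg.2 ((pow_dvd_pow π (by omega : a ≤ s + a - t)).trans (hgap a b hab p))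
  choose L hL using fun p => hcomplete.toIsPrecomplete.prec (f := fun i => cs i p) (cauchy p)
  have hLgap : ∀ i p, π ^ (s + i - t) ∣ L p - cs i p := by
    intro i p
    have h1 := (HR.smod_iff_dvd).1 (hL p (s + i))
    have h2 := hgap i (s + i) (by omega) p
    rw [show L p - cs i p = (cs (s + i) - cs i) p - (cs (s + i) p - L p) by simp]
    exact dvd_sub h2 ((pow_dvd_pow π (by omega : s + i - t ≤ s + i)).trans h1)
  have hL0 : ∀ p, π ^ (s - t) ∣ L p := by
    intro p
    have h := hLgap 0 p
    rw [show cs 0 p = (0 : R) from rfl, sub_zero] at h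
    simpa using h
  have hghat_monic : ∀ k, (HR.G g L k).Monic ∧ C (π ^ (s - t)) ∣ (HR.G g L k - g k) := by
    intro k
    refine ⟨(HR.G_monic g hmonic hdeg L k).1, ?_⟩
    rw [show HR.G g L k - g k = HR.polyOf (fun k => (g k).natDegree) L k by rw [HR.G]; ring]
    exact HR.C_dvd_polyOf _ _ hL0
  have hfact : f = ∏ k, HR.G g L k := by
    have hallM : ∀ M : ℕ, C (π ^ M) ∣ f - ∏ k, HR.G g L k := by
      intro M
      have h1 : C (π ^ (s + (M + t))) ∣ f - ∏ k, HR.G g (cs (M + t)) k := (Fseq (M + t)).2.2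
      have h2 : C (π ^ (s + (M + t) - t)) ∣ (∏ k, HR.G g (cs (M + t)) k) - ∏ k, HR.G g L k := by
        apply HR.dvd_prod_sub_prod
        intro k _
        apply HR.G_sub_dvd
        intro p
        rw [show cs (M + t) p - L p = -(L p - cs (M + t) p) by ring]
        exact dvd_neg.2 (hLgap (M + t) p)
      rw [show f - ∏ k, HR.G g L k = (f - ∏ k, HR.G g (cs (M + t)) k)
          + ((∏ k, HR.G g (cs (M + t)) k) - ∏ k, HR.G g L k) by ring]
      exact dvd_add ((map_dvd C (pow_dvd_pow π (by omega : M ≤ s + (M + t)))).trans h1)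
        ((map_dvd C (pow_dvd_pow π (by omega : M ≤ s + (M + t) - t))).trans h2)
    have hz : f - ∏ k, HR.G g L k = 0 := by
      apply Polynomial.ext
      intro e
      rw [Polynomial.coeff_zero]
      apply hcomplete.toIsHausdorff.haus
      intro M
      exact HR.smod_iff_dvd.2 (by
        simpa using (C_dvd_iff_dvd_coeff _ _).1 (hallM M) e)
    exact sub_eq_zero.1 hz
  refine ⟨HR.G g L, ⟨hghat_monic, hfact⟩, ?_⟩
  intro v hv
  exact HR.uniqueness g hmonic hdeg hπ hcomplete hs htm f v (HR.G g L)
    hv.1 hv.2 hghat_monic hfact
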